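/- Let q ≠ 1 be a real number and let G_T(t) = (e^{(1−q)t} − 1)/(1 − q) be the Tsallis group exponential. Under the same hypotheses as in the Fisher metric group theorem (p : ℝ^m → X → ℝ a positive parametrized family of probability densities, differentiation under the integral sign valid up to second order at θ₀ for A(θ) = ∫_X p(θ)(x) G_T(ln(p(θ)(x)/p(θ₀)(x))) dμ, and ∫_X ∂_j p(θ₀) dμ = 0 = ∫_X ∂_j ∂_k p(θ₀) dμ), the Hessian entry ∂_j ∂_k A(θ₀) equals (2 − q) · g_{jk}(θ₀), where g_{jk}(θ₀) is the standard Fisher information matrix; in particular G_T'(0) = 1 and G_T''(0) = 1 − q. -/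

import Mathlib

open MeasureTheory Filter

private lemma tsallisDeriv' (q : ℝ) (hq : q ≠ 1) {f : ℝ → ℝ} {f' x : ℝ}
    (hf : HasDerivAt f f' x) :
    HasDerivAt (fun t => (Real.exp ((1 - q) * f t) - 1) / (1 - q))
      (Real.exp ((1 - q) * f x) * f') x := by
  have h1q : (1 : ℝ) - q ≠ 0 := sub_ne_zero.mpr (Ne.symm hq)
  have h := (((hf.const_mul (1 - q)).exp).sub_const 1).div_const (1 - q)
  exact h.congr_deriv (by rw [mul_left_comm, mul_div_cancel_left₀ _ h1q])

private lemma tsallisDeriv (q : ℝ) (hq : q ≠ 1) (t : ℝ) :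
    HasDerivAt (fun t => (Real.exp ((1 - q) * t) - 1) / (1 - q))
      (Real.exp ((1 - q) * t)) t := by
  simpa using tsallisDeriv' q hq (hasDerivAt_id t)
theorem fisher_metric_group_tsallis
    {X : Type*} [MeasurableSpace X] (μ : Measure X) {m : ℕ}
    (q : ℝ) (hq : q ≠ 1) (G : ℝ → ℝ)
    (hG : ∀ t, G t = (Real.exp ((1 - q) * t) - 1) / (1 - q))
    (p : (Fin m → ℝ) → X → ℝ)
    -- `p` is a parametrized family of probability densities
    (hppos : ∀ θ : Fin m → ℝ, ∀ᵐ x ∂μ, 0 < p θ x)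
    (hpone : ∀ θ : Fin m → ℝ, ∫ x, p θ x ∂μ = 1)
    (θ₀ : Fin m → ℝ) (j k : Fin m)
    -- for μ-a.e. x, the map θ ↦ p θ x has first partial derivatives `p₁ i θ x` ...
    (p₁ : Fin m → (Fin m → ℝ) → X → ℝ)
    (hp₁ : ∀ᵐ x ∂μ, ∀ (i : Fin m) (θ : Fin m → ℝ),
      HasDerivAt (fun s => p (Function.update θ i s) x) (p₁ i θ x) (θ i))
    -- ... and the mixed second partial derivative `∂_j ∂_k p = p₂` at θ₀
    (p₂ : X → ℝ)
    (hp₂ : ∀ᵐ x ∂μ, HasDerivAt (fun s => p₁ k (Function.update θ₀ j s) x) (p₂ x) (θ₀ j))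
    -- `A θ = D_G(p θ ‖ p θ₀)`, and `dA = ∂_k A` along the j-line through θ₀
    (A dA : (Fin m → ℝ) → ℝ)
    (hA : ∀ θ, A θ = ∫ x, p θ x * G (Real.log (p θ x / p θ₀ x)) ∂μ)
    (hdA : ∀ s : ℝ, HasDerivAt
      (fun t => A (Function.update (Function.update θ₀ j s) k t))
      (dA (Function.update θ₀ j s)) (Function.update θ₀ j s k))
    -- differentiation under the integral sign is valid to first order ...
    (q₁ : ℝ → X → ℝ)
    (hq₁ : ∀ᵐ x ∂μ, ∀ s : ℝ, HasDerivAt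
      (fun t => p (Function.update (Function.update θ₀ j s) k t) x *
        G (Real.log (p (Function.update (Function.update θ₀ j s) k t) x / p θ₀ x)))
      (q₁ s x) (Function.update θ₀ j s k))
    (hDUI₁ : ∀ s : ℝ, dA (Function.update θ₀ j s) = ∫ x, q₁ s x ∂μ)
    -- ... and to second order at θ₀
    (q₂ : X → ℝ)
    (hq₂ : ∀ᵐ x ∂μ, HasDerivAt (fun s => q₁ s x) (q₂ x) (θ₀ j))
    (hDUI₂ : HasDerivAt (fun s => ∫ x, q₁ s x ∂μ) (∫ x, q₂ x ∂μ) (θ₀ j))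
    -- the integrals of the derivatives of `p` vanish at θ₀
    (hvan₁ : ∫ x, p₁ j θ₀ x ∂μ = 0)
    (hvan₂ : ∫ x, p₂ x ∂μ = 0)
    -- (integrability of the pieces)
    (hint₂ : Integrable p₂ μ)
    (hfish : Integrable
      (fun x => p θ₀ x * ((p₁ j θ₀ x / p θ₀ x) * (p₁ k θ₀ x / p θ₀ x))) μ) :
    deriv G 0 = 1 ∧ deriv (deriv G) 0 = 1 - q ∧
    HasDerivAt (fun s => dA (Function.update θ₀ j s))
      ((2 - q) *
        ∫ x, p θ₀ x * ((p₁ j θ₀ x / p θ₀ x) * (p₁ k θ₀ x / p θ₀ x)) ∂μ)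
      (θ₀ j) := by
  have hGeq : G = fun t => (Real.exp ((1 - q) * t) - 1) / (1 - q) := funext hG
  subst hGeq
  refine ⟨by simpa using (tsallisDeriv q hq 0).deriv, ?_, ?_⟩
  · have hd : deriv (fun t => (Real.exp ((1 - q) * t) - 1) / (1 - q))
        = fun t => Real.exp ((1 - q) * t) :=
      funext fun t => (tsallisDeriv q hq t).deriv
    rw [hd]
    have := (((hasDerivAt_id (0 : ℝ)).const_mul (1 - q)).exp).deriv
    simpa using this
  -- the Hessian entry
  · -- closed form for the first-order integrand
    set E : ℝ → X → ℝ := fun s x =>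
      p₁ k (Function.update θ₀ j s) x *
        ((Real.exp ((1 - q) * Real.log (p (Function.update θ₀ j s) x / p θ₀ x)) - 1) / (1 - q)
          + Real.exp ((1 - q) * Real.log (p (Function.update θ₀ j s) x / p θ₀ x))) with hE
    have key1 : ∀ s : ℝ, ∀ᵐ x ∂μ, q₁ s x = E s x := by
      intro s
      filter_upwards [hppos (Function.update θ₀ j s), hppos θ₀, hq₁, hp₁] with x hpos hpos0 hq₁x hp₁x
      have hP : HasDerivAt (fun t => p (Function.update (Function.update θ₀ j s) k t) x)
          (p₁ k (Function.update θ₀ j s) x) (Function.update θ₀ j s k) :=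
        hp₁x k (Function.update θ₀ j s)
      have hL := (hP.div_const (p θ₀ x)).log
        (by rw [Function.update_eq_self]; exact (div_pos hpos hpos0).ne')
      have hbig := hP.mul (tsallisDeriv' q hq hL)
      have heq := (hq₁x s).unique hbig
      rw [heq, hE]
      simp only [Function.update_eq_self]
      have h0 : p (Function.update θ₀ j s) x ≠ 0 := hpos.ne'
      have h0' : p θ₀ x ≠ 0 := hpos0.ne'
      field_simp
    have hScount : (Set.range ((↑) : ℚ → ℝ)).Countable := Set.countable_range _
    have hAE : ∀ᵐ x ∂μ, ∀ s ∈ insert (θ₀ j) (Set.range ((↑) : ℚ → ℝ)), q₁ s x = E s x :=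
      (ae_ball_iff (hScount.insert _)).2 fun s _ => key1 s
    have key2 : ∀ᵐ x ∂μ, q₂ x = p₂ x +
        (2 - q) * (p θ₀ x * ((p₁ j θ₀ x / p θ₀ x) * (p₁ k θ₀ x / p θ₀ x))) := by
      filter_upwards [hq₂, hp₂, hp₁, hppos θ₀, hAE] with x hq₂x hp₂x hp₁x hpos hEq
      have hp' : HasDerivAt (fun s => p (Function.update θ₀ j s) x) (p₁ j θ₀ x) (θ₀ j) :=
        hp₁x j θ₀
      have hL := (hp'.div_const (p θ₀ x)).log
        (by rw [Function.update_eq_self]; exact (div_pos hpos hpos).ne')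
      have hbig := hp₂x.mul ((tsallisDeriv' q hq hL).add ((hL.const_mul (1 - q)).exp))
      -- uniqueness of the derivative along the (dense) rational directions
      have hdense : Dense ((Set.range ((↑) : ℚ → ℝ)) \ {θ₀ j}) :=
        (Rat.denseRange_cast : DenseRange ((↑) : ℚ → ℝ)).diff_singleton _
      haveI hne : (nhdsWithin (θ₀ j) ((Set.range ((↑) : ℚ → ℝ)) \ {θ₀ j})).NeBot :=
        mem_closure_iff_nhdsWithin_neBot.1 (by rw [hdense.closure_eq]; trivial)
      have hle : nhdsWithin (θ₀ j) ((Set.range ((↑) : ℚ → ℝ)) \ {θ₀ j})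
          ≤ nhdsWithin (θ₀ j) {θ₀ j}ᶜ :=
        nhdsWithin_mono _ fun y hy => hy.2
      have h1 : Tendsto (slope (fun s => q₁ s x) (θ₀ j))
          (nhdsWithin (θ₀ j) ((Set.range ((↑) : ℚ → ℝ)) \ {θ₀ j})) (nhds (q₂ x)) :=
        (hasDerivAt_iff_tendsto_slope.1 hq₂x).mono_left hle
      have h2 := (hasDerivAt_iff_tendsto_slope.1 hbig).mono_left hle
      have hev : slope (fun s => q₁ s x) (θ₀ j)
          =ᶠ[nhdsWithin (θ₀ j) ((Set.range ((↑) : ℚ → ℝ)) \ {θ₀ j})]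
          slope (fun s => E s x) (θ₀ j) := by
        filter_upwards [self_mem_nhdsWithin] with y hy
        have e1 : q₁ y x = E y x := hEq y (Set.mem_insert_of_mem _ hy.1)
        have e0 : q₁ (θ₀ j) x = E (θ₀ j) x := hEq _ (Set.mem_insert _ _)
        rw [slope_def_field, slope_def_field, e1, e0]
      have huniq := tendsto_nhds_unique (h1.congr' hev) h2
      rw [huniq]
      rw [Function.update_eq_self, div_self hpos.ne', Real.log_one, mul_zero, Real.exp_zero]
      have h0 : p θ₀ x ≠ 0 := hpos.ne'
      simp only [Pi.add_apply, Function.update_eq_self, div_self h0, Real.log_one, mul_zero,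
        Real.exp_zero]
      field_simp
      ring
    have hq2int : ∫ x, q₂ x ∂μ =
        (2 - q) * ∫ x, p θ₀ x * ((p₁ j θ₀ x / p θ₀ x) * (p₁ k θ₀ x / p θ₀ x)) ∂μ := by
      rw [integral_congr_ae key2, integral_add hint₂ ((hfish.const_mul (2 - q))), hvan₂,
        integral_const_mul, zero_add]
    rw [show (fun s => dA (Function.update θ₀ j s)) = fun s => ∫ x, q₁ s x ∂μ from
      funext hDUI₁, ← hq2int]
    exact hDUI₂
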